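/- Define the sequence (m̄_k)_{k≥1} by m̄_1 = 6, m̄_{2k} = m̄_{2k+1} = 6 + 5k for 1 ≤ k ≤ 23, and m̄_k = 121 for all k ≥ 47, and let Θ be the associated function. Let α₀ = 0.4875. Then Θ(α₀, 0.535) < 0, Θ(α₀, 0.7) > 0 and Θ(α₀, 0.995) < 0; consequently the function t ↦ Θ(α₀, t), which is continuous on (1 − α₀, 1], has at least two zeros in the open interval (0.535, 0.995). -/

import Mathlib

/-- The auxiliary function `Θ` associated to the sequence `m̄` (with `m̄ 0 = 0`):
`Θ(α,β) = 1 - β + ∑_{k=1}^∞ ((α-1)/β)^k (α/β)^{m̄_k}`. -/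
noncomputable def theta (m : ℕ → ℕ) (α β : ℝ) : ℝ :=
  1 - β + ∑' k : ℕ, ((α - 1) / β) ^ (k + 1) * (α / β) ^ (m (k + 1))

/-- The sequence with `m̄_1 = 6`, `m̄_{2k} = m̄_{2k+1} = 6 + 5k` for `1 ≤ k ≤ 23`
and `m̄_k = 121` for `k ≥ 47`. -/
def mbar (k : ℕ) : ℕ :=
  if k = 0 then 0 else if k = 1 then 6 else if k ≤ 47 then 6 + 5 * (k / 2) else 121

lemma mbar_tail (k : ℕ) : mbar (k + 47) = 121 := by
  rcases k with _ | k
  · rfl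
  · unfold mbar; rw [if_neg (by omega), if_neg (by omega), if_neg (by omega)]

/-- Closed form for `theta mbar`. -/
lemma theta_eq (α β : ℝ) (hβ : 0 < β) (hr : |(α - 1) / β| < 1) (hs0 : 0 ≤ α) (hs1 : α ≤ β) :
    theta mbar α β = 1 - β +
      (∑ j ∈ Finset.range 46, ((α - 1) / β) ^ (j + 1) * (α / β) ^ (mbar (j + 1)))
      + ((α - 1) / β) ^ 47 * (α / β) ^ 121 * (1 - (α - 1) / β)⁻¹ := by
  set r := (α - 1) / β with hrdef
  set s := α / β with hsdef
  have hs0' : 0 ≤ s := div_nonneg hs0 hβ.le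
  have hs1' : s ≤ 1 := div_le_one_of_le₀ hs1 hβ.le
  have hsum : Summable (fun k : ℕ => r ^ (k + 1) * s ^ (mbar (k + 1))) := by
    have hg : Summable (fun k : ℕ => |r| ^ (k + 1)) := by
      simpa [pow_succ, mul_comm] using
        (summable_geometric_of_lt_one (abs_nonneg r) hr).mul_left |r|
    apply Summable.of_norm_bounded hg
    intro k
    rw [norm_mul, norm_pow, norm_pow, Real.norm_eq_abs, Real.norm_eq_abs,
      abs_of_nonneg hs0']
    calc |r| ^ (k + 1) * s ^ mbar (k + 1) ≤ |r| ^ (k + 1) * 1 := by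
          exact mul_le_mul_of_nonneg_left (pow_le_one₀ hs0' hs1') (by positivity)
      _ = |r| ^ (k + 1) := mul_one _
  rw [theta, ← Summable.sum_add_tsum_nat_add 46 hsum]
  have htail : (fun k : ℕ => r ^ (k + 46 + 1) * s ^ (mbar (k + 46 + 1)))
      = fun k : ℕ => (r ^ 47 * s ^ 121) * r ^ k := by
    funext k
    have : k + 46 + 1 = k + 47 := by ring
    rw [this, mbar_tail, pow_add]
    ring
  rw [htail, tsum_mul_left, tsum_geometric_of_norm_lt_one (by rwa [Real.norm_eq_abs])]
  ring

/-- The closed form as a function of `t`. -/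
noncomputable def Ffun (t : ℝ) : ℝ :=
  1 - t + (∑ j ∈ Finset.range 46,
      ((0.4875 - 1) / t) ^ (j + 1) * ((0.4875 : ℝ) / t) ^ (mbar (j + 1)))
    + ((0.4875 - 1) / t) ^ 47 * ((0.4875 : ℝ) / t) ^ 121 * (1 - (0.4875 - 1) / t)⁻¹

lemma theta_eq_F {t : ℝ} (ht : t ∈ Set.Ioc (1 - (0.4875 : ℝ)) 1) :
    theta mbar 0.4875 t = Ffun t := by
  have h1 : (0.5125 : ℝ) < t := by
    have := ht.1; norm_num at this; linarith
  have h0 : (0 : ℝ) < t := by linarith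
  rw [Ffun, theta_eq 0.4875 t h0 ?_ (by norm_num) (by linarith)]
  rw [abs_div, abs_of_pos h0, div_lt_one h0,
    show |(0.4875 : ℝ) - 1| = 0.5125 by rw [abs_of_neg (by norm_num)]; norm_num]
  exact h1

lemma F_cont : ContinuousOn Ffun (Set.Ioc (1 - (0.4875 : ℝ)) 1) := by
  have hne : ∀ t ∈ Set.Ioc (1 - (0.4875 : ℝ)) 1, t ≠ 0 := by
    intro t ht
    have := ht.1; norm_num at this; intro h; rw [h] at this; norm_num at this
  have hdiv : ∀ c : ℝ, ContinuousOn (fun t : ℝ => c / t) (Set.Ioc (1 - (0.4875 : ℝ)) 1) :=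
    fun c => continuousOn_const.div continuousOn_id hne
  unfold Ffun
  apply ContinuousOn.add
  apply ContinuousOn.add
  · exact (continuousOn_const.sub continuousOn_id)
  · exact continuousOn_finset_sum _ fun j _ => ((hdiv _).pow _).mul ((hdiv _).pow _)
  · refine (((hdiv _).pow _).mul ((hdiv _).pow _)).mul (ContinuousOn.inv₀
      (continuousOn_const.sub (hdiv _)) fun t ht => ?_)
    have h1 : (0.5125 : ℝ) < t := by
      have := ht.1; norm_num at this; linarith
    have : ((0.4875 : ℝ) - 1) / t < 0 :=
      div_neg_of_neg_of_pos (by norm_num) (by linarith)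
    intro h
    nlinarith

/-- With `α₀ = 0.4875`, `Θ(α₀, 0.535) < 0`, `Θ(α₀, 0.7) > 0`, `Θ(α₀, 0.995) < 0`;
consequently `t ↦ Θ(α₀,t)`, continuous on `(1-α₀, 1]`, has at least two zeros in
`(0.535, 0.995)`. -/
theorem stmt2 :
    theta mbar 0.4875 0.535 < 0 ∧
    0 < theta mbar 0.4875 0.7 ∧
    theta mbar 0.4875 0.995 < 0 ∧
    ContinuousOn (fun t : ℝ => theta mbar 0.4875 t) (Set.Ioc (1 - 0.4875 : ℝ) 1) ∧
    ∃ t₁ t₂ : ℝ, t₁ ∈ Set.Ioo (0.535 : ℝ) 0.995 ∧ t₂ ∈ Set.Ioo (0.535 : ℝ) 0.995 ∧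
      t₁ ≠ t₂ ∧ theta mbar 0.4875 t₁ = 0 ∧ theta mbar 0.4875 t₂ = 0 := by
  have hv1 : theta mbar 0.4875 0.535 < 0 := by
    rw [theta_eq_F (by norm_num)]
    unfold Ffun
    norm_num [Finset.sum_range_succ, mbar]
  have hv2 : 0 < theta mbar 0.4875 0.7 := by
    rw [theta_eq_F (by norm_num)]
    unfold Ffun
    norm_num [Finset.sum_range_succ, mbar]
  have hv3 : theta mbar 0.4875 0.995 < 0 := by
    rw [theta_eq_F (by norm_num)]
    unfold Ffun
    norm_num [Finset.sum_range_succ, mbar]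
  have hcont : ContinuousOn (fun t : ℝ => theta mbar 0.4875 t)
      (Set.Ioc (1 - 0.4875 : ℝ) 1) :=
    F_cont.congr fun t ht => theta_eq_F ht
  refine ⟨hv1, hv2, hv3, hcont, ?_⟩
  have hsub1 : Set.Icc (0.535 : ℝ) 0.7 ⊆ Set.Ioc (1 - 0.4875 : ℝ) 1 := by
    intro x hx; constructor
    · have := hx.1; norm_num; linarith
    · have := hx.2; linarith
  have hsub2 : Set.Icc (0.7 : ℝ) 0.995 ⊆ Set.Ioc (1 - 0.4875 : ℝ) 1 := by
    intro x hx; constructor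
    · have := hx.1; norm_num; linarith
    · have := hx.2; linarith
  set f : ℝ → ℝ := fun t => theta mbar 0.4875 t with hf
  have h1 : (0 : ℝ) ∈ f '' Set.Ioo 0.535 0.7 :=
    intermediate_value_Ioo (by norm_num) (hcont.mono hsub1) ⟨hv1, hv2⟩
  have h2 : (0 : ℝ) ∈ f '' Set.Ioo 0.7 0.995 :=
    intermediate_value_Ioo' (by norm_num) (hcont.mono hsub2) ⟨hv3, hv2⟩
  obtain ⟨t₁, ht₁, hft₁⟩ := h1
  obtain ⟨t₂, ht₂, hft₂⟩ := h2
  exact ⟨t₁, t₂, ⟨ht₁.1, by linarith [ht₁.2]⟩, ⟨by linarith [ht₂.1], ht₂.2⟩,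
    by intro h; rw [h] at ht₁; linarith [ht₁.2, ht₂.1], hft₁, hft₂⟩
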